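/- For every real β > 1 and every integer k ≥ 0, |W_β'(β^k)| ≥ |W_β(β^{-1})| · (β-1)^k · β^{-k} · β^{k(k-1)/2}. -/

import Mathlib

/-- `Wprod β z = ∏_{j=0}^∞ (1 - z·β^{-j})`, the entire function from the context. -/
noncomputable def Wprod (β : ℝ) (z : ℂ) : ℂ := ∏' j : ℕ, (1 - z / (β : ℂ) ^ j)

open Finset

/-- The elementary real inequality `∏_{j<k} (β^{j+1}-1) ≥ (β-1)^k β^{k(k-1)/2}`. -/
lemma aux_prod_ineq (β : ℝ) (hβ : 1 < β) (k : ℕ) :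
    (β - 1) ^ k * β ^ (k * (k - 1) / 2) ≤ ∏ j ∈ range k, (β ^ (j + 1) - 1) := by
  have h2 : (β - 1) ^ k * β ^ (k * (k - 1) / 2) = ∏ j ∈ range k, ((β - 1) * β ^ j) := by
    rw [Finset.prod_mul_distrib, Finset.prod_const, Finset.prod_pow_eq_pow_sum,
      Finset.sum_range_id, Finset.card_range]
  rw [h2]
  apply Finset.prod_le_prod
  · intro i _
    have h1 : (0:ℝ) < β ^ i := pow_pos (by linarith) i
    nlinarith
  · intro i _
    have h1 : (1:ℝ) ≤ β ^ i := one_le_pow₀ (le_of_lt hβ)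
    have h2 : β ^ (i + 1) = β ^ i * β := pow_succ β i
    nlinarith

set_option maxHeartbeats 1000000 in
theorem statement3 (β : ℝ) (hβ : 1 < β) (k : ℕ) :
    ‖Wprod β ((β : ℂ)⁻¹)‖ * (β - 1) ^ k * (β ^ k)⁻¹ * β ^ (k * (k - 1) / 2)
      ≤ ‖deriv (Wprod β) ((β : ℂ) ^ k)‖ := by
  have hβ0 : (0:ℝ) < β := by linarith
  set b : ℂ := (β : ℂ) with hbdef
  have hb0 : b ≠ 0 := by
    simp only [hbdef, ne_eq, Complex.ofReal_eq_zero]; linarith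
  have hbj : ∀ j : ℕ, ‖b ^ j‖ = β ^ j := by
    intro j
    rw [norm_pow, hbdef, Complex.norm_real, Real.norm_eq_abs, abs_of_pos hβ0]
  set x : ℂ := b ^ k with hxdef
  set r : ℝ := β ^ k * (β - 1) / 2 with hrdef
  have hr0 : 0 < r := by
    have : (0:ℝ) < β ^ k := pow_pos hβ0 k
    rw [hrdef]; nlinarith
  set c : ℝ := (β + 1) / (2 * β) with hcdef
  have hc0 : 0 < c := by rw [hcdef]; positivity
  have hc1 : c < 1 := by
    rw [hcdef, div_lt_one (by linarith)]; linarith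
  set s : Set ℂ := Metric.closedBall x r with hsdef
  have hzs : ∀ z ∈ s, ‖z‖ ≤ β ^ k * (β + 1) / 2 := by
    intro z hz
    have h1 : dist z x ≤ r := Metric.mem_closedBall.mp hz
    have h2 : ‖z‖ ≤ ‖x‖ + ‖z - x‖ := norm_le_norm_add_norm_sub' z x
    have h3 : ‖x‖ = β ^ k := hbj k
    rw [dist_eq_norm] at h1
    rw [hrdef] at h1
    nlinarith [norm_nonneg (z - x)]
  have key : ∀ z ∈ s, ∀ m : ℕ, ‖z / b ^ (m + k + 1)‖ ≤ c * β⁻¹ ^ m := by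
    intro z hz m
    have hpow : (0:ℝ) < β ^ (m + k + 1) := pow_pos hβ0 _
    have h1 : ‖z / b ^ (m + k + 1)‖ = ‖z‖ / β ^ (m + k + 1) := by
      rw [norm_div, hbj]
    have heq : (β ^ k * (β + 1) / 2) / β ^ (m + k + 1) = c * β⁻¹ ^ m := by
      rw [hcdef, pow_add, pow_add, pow_one, inv_pow]
      have hm : (0:ℝ) < β ^ m := pow_pos hβ0 m
      have hk : (0:ℝ) < β ^ k := pow_pos hβ0 k
      field_simp
    rw [h1, ← heq]
    gcongr
    exact hzs z hz
  have hinvle : ∀ m : ℕ, β⁻¹ ^ m ≤ 1 := by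
    intro m
    apply pow_le_one₀ (by positivity)
    rw [inv_le_one_iff₀]; right; linarith
  have keyc : ∀ z ∈ s, ∀ m : ℕ, ‖z / b ^ (m + k + 1)‖ ≤ c := by
    intro z hz m
    refine (key z hz m).trans ?_
    calc c * β⁻¹ ^ m ≤ c * 1 := by
          apply mul_le_mul_of_nonneg_left (hinvle m) (le_of_lt hc0)
      _ = c := mul_one c
  have hre : ∀ z ∈ s, ∀ m : ℕ, 0 < (1 - z / b ^ (m + k + 1)).re := by
    intro z hz m
    have h1 : (z / b ^ (m + k + 1)).re ≤ ‖z / b ^ (m + k + 1)‖ := Complex.re_le_norm _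
    have h2 := keyc z hz m
    simp only [Complex.sub_re, Complex.one_re]
    linarith
  have hslit : ∀ z ∈ s, ∀ m : ℕ, (1 - z / b ^ (m + k + 1)) ∈ Complex.slitPlane := by
    intro z hz m
    exact Complex.mem_slitPlane_iff.mpr (Or.inl (hre z hz m))
  have hne : ∀ z ∈ s, ∀ m : ℕ, (1 - z / b ^ (m + k + 1)) ≠ 0 :=
    fun z hz m => Complex.slitPlane_ne_zero (hslit z hz m)
  set C : ℝ := 1 + c * (1 - c)⁻¹ / 2 with hCdef
  have hC0 : 0 < C := by
    have h1 : (0:ℝ) < (1 - c)⁻¹ := inv_pos.mpr (by linarith)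
    have h2 := mul_pos hc0 h1
    rw [hCdef]; linarith
  have hlog : ∀ w : ℂ, ‖w‖ ≤ c → ‖Complex.log (1 + w)‖ ≤ C * ‖w‖ := by
    intro w hw
    have hw1 : ‖w‖ < 1 := lt_of_le_of_lt hw hc1
    have h1 := Complex.norm_log_one_add_le hw1
    have ht0 : 0 ≤ ‖w‖ := norm_nonneg w
    have hinv : (1 - ‖w‖)⁻¹ ≤ (1 - c)⁻¹ := by
      apply inv_anti₀ (by linarith) (by linarith)
    have hsq : ‖w‖ ^ 2 ≤ c * ‖w‖ := by nlinarith
    have hiw : (0:ℝ) ≤ (1 - ‖w‖)⁻¹ := inv_nonneg.mpr (by linarith)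
    have h2 : ‖w‖ ^ 2 * (1 - ‖w‖)⁻¹ / 2 ≤ (c * ‖w‖) * (1 - c)⁻¹ / 2 := by
      have := mul_le_mul hsq hinv hiw (by positivity : (0:ℝ) ≤ c * ‖w‖)
      linarith
    calc ‖Complex.log (1 + w)‖ ≤ ‖w‖ ^ 2 * (1 - ‖w‖)⁻¹ / 2 + ‖w‖ := h1
      _ ≤ (c * ‖w‖) * (1 - c)⁻¹ / 2 + ‖w‖ := by linarith
      _ = C * ‖w‖ := by rw [hCdef]; ring
  set u : ℕ → ℝ := fun m => C * c * β⁻¹ ^ m with hudef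
  have hu : Summable u := by
    apply Summable.mul_left
    apply summable_geometric_of_lt_one (by positivity)
    rw [inv_lt_one_iff₀]; right; linarith
  have hbound : ∀ m : ℕ, ∀ z ∈ s, ‖Complex.log (1 - z / b ^ (m + k + 1))‖ ≤ u m := by
    intro m z hz
    have h1 : (1 : ℂ) - z / b ^ (m + k + 1) = 1 + (-(z / b ^ (m + k + 1))) := by ring
    rw [h1]
    have h2 : ‖-(z / b ^ (m + k + 1))‖ = ‖z / b ^ (m + k + 1)‖ := norm_neg _
    calc ‖Complex.log (1 + -(z / b ^ (m + k + 1)))‖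
        ≤ C * ‖-(z / b ^ (m + k + 1))‖ := hlog _ (by rw [h2]; exact keyc z hz m)
      _ ≤ C * (c * β⁻¹ ^ m) := by
          apply mul_le_mul_of_nonneg_left _ (le_of_lt hC0)
          rw [h2]; exact key z hz m
      _ = u m := by rw [hudef]; ring
  have hsumlog : ∀ z ∈ s, Summable (fun m => Complex.log (1 - z / b ^ (m + k + 1))) := by
    intro z hz
    exact Summable.of_norm_bounded hu (fun m => hbound m z hz)
  have hScont : ContinuousOn (fun z => ∑' m : ℕ, Complex.log (1 - z / b ^ (m + k + 1))) s := by
    apply continuousOn_tsum _ hu (fun n z hz => hbound n z hz)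
    intro m
    intro z hz
    apply ContinuousAt.continuousWithinAt
    apply ContinuousAt.clog
    · exact (continuousAt_const.sub (continuousAt_id.div_const _))
    · exact hslit z hz m
  -- subtype versions
  set F : ℕ → s → ℂ := fun m zs => 1 - (zs : ℂ) / b ^ (m + k + 1) with hFdef
  have hfn : ∀ (zs : s) (m : ℕ), F m zs ≠ 0 := fun zs m => hne zs zs.2 m
  have hfs : ∀ zs : s, Summable fun m => Complex.log (F m zs) :=
    fun zs => hsumlog zs zs.2
  have heq : (fun zs : s => Complex.exp (∑' m, Complex.log (F m zs))) = fun zs => ∏' m, F m zs :=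
    funext fun zs => Complex.cexp_tsum_eq_tprod (hfn zs) (hfs zs)
  set T : ℂ → ℂ := fun z => ∏' m : ℕ, (1 - z / b ^ (m + k + 1)) with hTdef
  have hTrest : Continuous (fun zs : s => T (zs : ℂ)) := by
    have h1 : (fun zs : s => T (zs : ℂ)) = fun zs : s => ∏' m : ℕ, F m zs := rfl
    rw [h1, ← heq]
    apply Complex.continuous_exp.comp
    exact ContinuousOn.restrict hScont
  have hTcontOn : ContinuousOn T s := continuousOn_iff_continuous_restrict.mpr hTrest
  have hmul_tail : ∀ z ∈ s, Multipliable fun m : ℕ => (1 - z / b ^ (m + k + 1)) := by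
    intro z hz
    exact Complex.multipliable_of_summable_log (hsumlog z hz)
  set g : ℂ → ℂ := fun z => ∏ i ∈ range (k + 1), (1 - z / b ^ i) with hgdef
  have hsplit : ∀ z ∈ s, Wprod β z = g z * T z := by
    intro z hz
    have h' : Multipliable fun m : ℕ => (1 - z / b ^ (m + (k + 1))) := hmul_tail z hz
    have h2 := (Multipliable.prod_mul_tprod_nat_mul' (f := fun j : ℕ => 1 - z / b ^ j) (k := k + 1) h').symm
    rw [Wprod]
    exact h2
  have hx_mem : x ∈ s := Metric.mem_closedBall_self (le_of_lt hr0)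
  have hxk : (1 : ℂ) - x / b ^ k = 0 := by
    rw [hxdef, div_self (pow_ne_zero k hb0), sub_self]
  have hgx : g x = 0 := Finset.prod_eq_zero (Finset.self_mem_range_succ k) hxk
  have hWx : Wprod β x = 0 := by rw [hsplit x hx_mem, hgx, zero_mul]
  set R : ℂ → ℂ := fun z => ∏ i ∈ range k, (1 - z / b ^ i) with hRdef
  have hfk : HasDerivAt (fun z : ℂ => 1 - z / b ^ k) (-(b ^ k)⁻¹) x := by
    have h := ((hasDerivAt_id x).div_const (b ^ k)).const_sub 1
    simpa [one_div] using h
  have hRdiff : DifferentiableAt ℂ R x := by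
    apply DifferentiableAt.fun_finsetProd
    intro i _
    exact (differentiableAt_const 1).sub (differentiableAt_id.div_const _)
  have hg : HasDerivAt g (deriv R x * (1 - x / b ^ k) + R x * -(b ^ k)⁻¹) x := by
    have h := (hRdiff.hasDerivAt).mul hfk
    have hgeq : g = fun z => R z * (1 - z / b ^ k) := by
      funext z
      rw [hgdef, hRdef]
      exact Finset.prod_range_succ _ _
    rw [hgeq]
    exact h
  set d : ℂ := R x * -(b ^ k)⁻¹ with hddef
  have hg' : HasDerivAt g d x := by
    have : deriv R x * (1 - x / b ^ k) + R x * -(b ^ k)⁻¹ = d := by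
      rw [hxk, mul_zero, zero_add, hddef]
    rwa [this] at hg
  have hsmem : s ∈ nhds x := Metric.closedBall_mem_nhds x hr0
  have hTt : Filter.Tendsto T (nhdsWithin x {x}ᶜ) (nhds (T x)) :=
    ((hTcontOn.continuousAt hsmem).tendsto).mono_left nhdsWithin_le_nhds
  have hgs : Filter.Tendsto (slope g x) (nhdsWithin x {x}ᶜ) (nhds d) :=
    hasDerivAt_iff_tendsto_slope.mp hg'
  have hWder : HasDerivAt (Wprod β) (d * T x) x := by
    rw [hasDerivAt_iff_tendsto_slope]
    apply Filter.Tendsto.congr' _ (hgs.mul hTt)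
    have hev : ∀ᶠ z in nhdsWithin x {x}ᶜ, z ∈ s :=
      Filter.eventually_iff_exists_mem.mpr ⟨s, nhdsWithin_le_nhds hsmem, fun z hz => hz⟩
    filter_upwards [hev] with z hz
    rw [slope_def_field, slope_def_field, hWx, hgx, hsplit z hz]
    ring
  have hderiv : deriv (Wprod β) x = d * T x := hWder.deriv
  -- identify T x with Wprod β β⁻¹
  have hTx : T x = Wprod β ((β : ℂ)⁻¹) := by
    rw [hTdef, Wprod]
    apply tprod_congr
    intro m
    congr 1
    rw [hxdef]
    rw [pow_add, pow_add, pow_one]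
    field_simp
    rw [hbdef]
    rw [mul_comm, div_self]
    exact mul_ne_zero hb0 (pow_ne_zero _ hb0)
  -- compute |R x|
  have hRreal : R x = ((∏ i ∈ range k, (1 - β ^ k / β ^ i) : ℝ) : ℂ) := by
    rw [hRdef, hxdef, hbdef]
    push_cast
    rfl
  have habsR : ‖R x‖ = |∏ i ∈ range k, (1 - β ^ k / β ^ i)| := by
    rw [hRreal, Complex.norm_real, Real.norm_eq_abs]
  have hprod_eq : |∏ i ∈ range k, (1 - β ^ k / β ^ i)| = ∏ i ∈ range k, (β ^ k / β ^ i - 1) := by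
    rw [Finset.abs_prod]
    apply Finset.prod_congr rfl
    intro i hi
    have hik : i < k := Finset.mem_range.mp hi
    have h1 : (1:ℝ) ≤ β ^ k / β ^ i := by
      rw [le_div_iff₀ (pow_pos hβ0 i), one_mul]
      exact pow_le_pow_right₀ (le_of_lt hβ) (le_of_lt hik)
    rw [abs_sub_comm, abs_of_nonneg (by linarith)]
  have hreflect : ∏ i ∈ range k, (β ^ k / β ^ i - 1) = ∏ j ∈ range k, (β ^ (j + 1) - 1) := by
    rw [← Finset.prod_range_reflect (fun j => β ^ (j + 1) - 1) k]
    apply Finset.prod_congr rfl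
    intro i hi
    have hik : i < k := Finset.mem_range.mp hi
    have h1 : k - 1 - i + 1 = k - i := by omega
    have h2 : β ^ k / β ^ i = β ^ (k - i) := by
      rw [pow_sub₀ β (ne_of_gt hβ0) (le_of_lt hik), div_eq_mul_inv]
    rw [h1, h2]
  -- final computation
  have habsd : ‖d‖ = (∏ i ∈ range k, (β ^ k / β ^ i - 1)) * (β ^ k)⁻¹ := by
    rw [hddef, norm_mul, habsR, hprod_eq]
    congr 1
    rw [norm_neg, norm_inv, norm_pow]
    congr 1
    congr 1
    rw [hbdef, Complex.norm_real, Real.norm_eq_abs, abs_of_pos hβ0]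
  rw [hderiv, norm_mul, habsd, ← hTx]
  have hfinal : (β - 1) ^ k * β ^ (k * (k - 1) / 2) ≤ ∏ i ∈ range k, (β ^ k / β ^ i - 1) := by
    rw [hreflect]
    exact aux_prod_ineq β hβ k
  have hA : 0 ≤ ‖T x‖ := norm_nonneg _
  have hBk : (0:ℝ) ≤ (β ^ k)⁻¹ := by positivity
  calc ‖T x‖ * (β - 1) ^ k * (β ^ k)⁻¹ * β ^ (k * (k - 1) / 2)
      = ((β - 1) ^ k * β ^ (k * (k - 1) / 2)) * ((β ^ k)⁻¹ * ‖T x‖) := by ring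
    _ ≤ (∏ i ∈ range k, (β ^ k / β ^ i - 1)) * ((β ^ k)⁻¹ * ‖T x‖) := by
        apply mul_le_mul_of_nonneg_right hfinal (by positivity)
    _ = (∏ i ∈ range k, (β ^ k / β ^ i - 1)) * (β ^ k)⁻¹ * ‖T x‖ := by ring
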